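/- Mohar's bound: for every connected simple graph G on n vertices with diameter D_max, the algebraic connectivity satisfies λ₂ ≥ 4/(n · D_max). -/

import Mathlib

open SimpleGraph Finset

/-- The algebraic connectivity: the second smallest eigenvalue of the Laplacian matrix. -/
noncomputable def algebraicConnectivity {n : ℕ} (G : SimpleGraph (Fin n))
    [DecidableRel G.Adj] : ℝ :=
  if h : 1 < n then
    (((G.posSemidef_lapMatrix ℝ).1.eigenvalues) ∘
      (Tuple.sort ((G.posSemidef_lapMatrix ℝ).1.eigenvalues))) ⟨1, h⟩
  else 0

/-- A fixed system of shortest paths, one for each (ordered) pair of vertices. -/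
structure ShortestPathSystem {n : ℕ} (G : SimpleGraph (Fin n)) where
  path : ∀ u v : Fin n, G.Walk u v
  isPath : ∀ u v : Fin n, (path u v).IsPath
  length_eq : ∀ u v : Fin n, (path u v).length = G.dist u v

/-- The connection-graph-stability score of an edge `e`: half the double sum over ordered
pairs of vertices of the length of the chosen shortest path, if it passes through `e`. -/
noncomputable def cgsScore {n : ℕ} {G : SimpleGraph (Fin n)} (P : ShortestPathSystem G)
    (e : Sym2 (Fin n)) : ℝ :=
  (1/2) * ∑ u : Fin n, ∑ v : Fin n,
    (if e ∈ (P.path u v).edges then ((P.path u v).length : ℝ) else 0)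

/-- The squared difference of `x` across an edge. -/
noncomputable def edgeSq {V : Type*} (x : V → ℝ) : Sym2 V → ℝ :=
  Sym2.lift ⟨fun a b => (x a - x b)^2, fun a b => by ring_nf⟩

section MoharAux

variable {V : Type*} {G : SimpleGraph V}

/-- There is a walk from `u` to the `k`-th vertex of a walk, of length at most `k`. -/
lemma exists_walk_prefix {u v : V} (w : G.Walk u v) (k : ℕ) :
    ∃ p : G.Walk u (w.getVert k), p.length ≤ k := by
  induction w generalizing k with
  | nil => exact ⟨(SimpleGraph.Walk.nil).copy rfl rfl, by simp⟩
  | @cons a b c h p ih =>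
    cases k with
    | zero => exact ⟨(SimpleGraph.Walk.nil).copy rfl (by simp [SimpleGraph.Walk.getVert_zero]), by simp⟩
    | succ k =>
      obtain ⟨q, hq⟩ := ih k
      exact ⟨(q.cons h).copy rfl (by rw [SimpleGraph.Walk.getVert_cons_succ]), by simpa using Nat.succ_le_succ hq⟩

/-- There is a walk from the `k`-th vertex of a walk to the end, of length at most `length - k`. -/
lemma exists_walk_suffix {u v : V} (w : G.Walk u v) (k : ℕ) :
    ∃ q : G.Walk (w.getVert k) v, q.length ≤ w.length - k := by
  induction w generalizing k with
  | nil => exact ⟨(SimpleGraph.Walk.nil).copy rfl rfl, by simp⟩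
  | @cons a b c h p ih =>
    cases k with
    | zero =>
      exact ⟨((p.cons h)).copy (by simp [SimpleGraph.Walk.getVert_zero]) rfl, by simp⟩
    | succ k =>
      obtain ⟨q, hq⟩ := ih k
      refine ⟨q.copy (by rw [SimpleGraph.Walk.getVert_cons_succ]) rfl, ?_⟩
      simp only [SimpleGraph.Walk.length_copy, SimpleGraph.Walk.length_cons]
      omega

/-- On a geodesic, the `k`-th vertex is at distance exactly `k` from the start and
`length - k` from the end. -/
lemma geodesic_getVert_dist {u v : V} (hG : G.Connected) (w : G.Walk u v)
    (hw : w.length = G.dist u v) (k : ℕ) (hk : k ≤ w.length) :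
    G.dist u (w.getVert k) = k ∧ G.dist (w.getVert k) v = w.length - k := by
  obtain ⟨p, hp⟩ := exists_walk_prefix w k
  obtain ⟨q, hq⟩ := exists_walk_suffix w k
  have h1 : G.dist u (w.getVert k) ≤ k := (SimpleGraph.dist_le p).trans hp
  have h2 : G.dist (w.getVert k) v ≤ w.length - k := (SimpleGraph.dist_le q).trans hq
  have h3 : G.dist u v ≤ G.dist u (w.getVert k) + G.dist (w.getVert k) v :=
    hG.dist_triangle
  omega

/-- Every edge of a walk joins consecutive vertices. -/
lemma edge_eq_getVert {u v : V} (w : G.Walk u v) {e : Sym2 V} (he : e ∈ w.edges) :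
    ∃ i, i < w.length ∧ e = s(w.getVert i, w.getVert (i + 1)) := by
  induction w with
  | nil => simp at he
  | @cons a b c h p ih =>
    rw [SimpleGraph.Walk.edges_cons, List.mem_cons] at he
    rcases he with he | he
    · exact ⟨0, by simp, by
        rw [he]
        rw [SimpleGraph.Walk.getVert_zero, SimpleGraph.Walk.getVert_cons_succ,
          SimpleGraph.Walk.getVert_zero]⟩
    · obtain ⟨i, hi, hei⟩ := ih he
      exact ⟨i + 1, by simp [SimpleGraph.Walk.length_cons]; omega, by
        rw [SimpleGraph.Walk.getVert_cons_succ, SimpleGraph.Walk.getVert_cons_succ]; exact hei⟩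

/-- Orientation of an edge on a geodesic: one endpoint is strictly closer to `u`,
the other strictly closer to `v`. -/
lemma geodesic_edge_orientation {u v a b : V} (hG : G.Connected) (w : G.Walk u v)
    (hw : w.length = G.dist u v) (he : s(a, b) ∈ w.edges) :
    (G.dist u a < G.dist u b ∧ G.dist v b < G.dist v a) ∨
    (G.dist u b < G.dist u a ∧ G.dist v a < G.dist v b) := by
  obtain ⟨i, hi, hei⟩ := edge_eq_getVert w he
  have h1 := geodesic_getVert_dist hG w hw i (le_of_lt hi)
  have h2 := geodesic_getVert_dist hG w hw (i + 1) hi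
  rw [Sym2.eq_iff] at hei
  rcases hei with ⟨rfl, rfl⟩ | ⟨rfl, rfl⟩
  · left
    constructor
    · rw [h1.1, h2.1]; omega
    · rw [SimpleGraph.dist_comm, @SimpleGraph.dist_comm _ _ v, h1.2, h2.2]; omega
  · right
    constructor
    · rw [h1.1, h2.1]; omega
    · rw [SimpleGraph.dist_comm, @SimpleGraph.dist_comm _ _ v, h1.2, h2.2]; omega

lemma edgeSq_mk (x : V → ℝ) (a b : V) : edgeSq x s(a, b) = (x a - x b)^2 := rfl

lemma edgeSq_nonneg (x : V → ℝ) (e : Sym2 V) : 0 ≤ edgeSq x e := by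
  induction e with
  | _ a b => exact sq_nonneg _

lemma list_sum_edgeSq_nonneg (x : V → ℝ) (l : List (Sym2 V)) :
    0 ≤ (l.map (edgeSq x)).sum := by
  apply List.sum_nonneg
  intro y hy
  obtain ⟨e, _, rfl⟩ := List.mem_map.mp hy
  exact edgeSq_nonneg x e

private lemma step_ineq (s t L S : ℝ) (hS : 0 ≤ S) (hL : L = 0 ∨ 1 ≤ L) (h : t^2 ≤ L*S) :
    (s + t)^2 ≤ (L + 1) * (s^2 + S) := by
  rcases hL with rfl | hL
  · have ht : t = 0 := by nlinarith [sq_nonneg t]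
    rw [ht]
    nlinarith
  · nlinarith [sq_nonneg (L * s - t), mul_le_mul_of_nonneg_left h (by linarith : (0:ℝ) ≤ L + 1)]

/-- Cauchy–Schwarz along a walk. -/
lemma walk_sq_le (x : V → ℝ) {u v : V} (w : G.Walk u v) :
    (x u - x v)^2 ≤ (w.length : ℝ) * (w.edges.map (edgeSq x)).sum := by
  induction w with
  | nil => simp
  | @cons a b c h p ih =>
    rw [SimpleGraph.Walk.edges_cons, SimpleGraph.Walk.length_cons, List.map_cons, List.sum_cons,
      edgeSq_mk]
    push_cast
    have hxac : x a - x c = (x a - x b) + (x b - x c) := by ring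
    rw [hxac]
    refine step_ineq _ _ _ _ (list_sum_edgeSq_nonneg x _) ?_ ih
    rcases Nat.eq_zero_or_pos p.length with h0 | hpos
    · left; rw [h0]; norm_num
    · right; exact_mod_cast hpos

lemma walk_edges_sum_eq [Fintype V] [DecidableEq V] [DecidableRel G.Adj]
    {u v : V} (w : G.Walk u v) (hw : w.edges.Nodup) (x : V → ℝ) :
    (w.edges.map (edgeSq x)).sum
      = ∑ e ∈ G.edgeFinset, (if e ∈ w.edges then edgeSq x e else 0) := by
  rw [← Finset.sum_filter]
  have hfil : Finset.filter (fun e => e ∈ w.edges) G.edgeFinset = w.edges.toFinset := by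
    ext e
    simp only [Finset.mem_filter, List.mem_toFinset, SimpleGraph.mem_edgeFinset]
    exact ⟨fun h => h.2, fun h => ⟨w.edges_subset_edgeSet h, h⟩⟩
  rw [hfil]
  exact (List.sum_toFinset (edgeSq x) hw).symm

/-- Sum over the edge set versus double sum over adjacent ordered pairs. -/
lemma sum_edgeFinset_eq_half [Fintype V] [DecidableEq V] [DecidableRel G.Adj]
    (F : Sym2 V → ℝ) :
    ∑ e ∈ G.edgeFinset, F e
      = (∑ i : V, ∑ j : V, if G.Adj i j then F s(i, j) else 0) / 2 := by
  have hdarts : ∑ d : G.Dart, F d.edge = ∑ e ∈ G.edgeFinset, 2 * F e := by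
    rw [← Finset.sum_fiberwise_of_maps_to (g := SimpleGraph.Dart.edge) (t := G.edgeFinset)
      (fun d _ => SimpleGraph.mem_edgeFinset.mpr d.edge_mem) (fun d => F d.edge)]
    refine Finset.sum_congr rfl fun e he => ?_
    have hcard : (Finset.filter (fun d : G.Dart => d.edge = e) Finset.univ).card = 2 := by
      have h2 := G.dart_edge_fiber_card e (SimpleGraph.mem_edgeFinset.mp he)
      convert h2 using 2
    calc ∑ d ∈ Finset.filter (fun d : G.Dart => d.edge = e) Finset.univ, F d.edge
        = ∑ _d ∈ Finset.filter (fun d : G.Dart => d.edge = e) Finset.univ, F e :=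
          Finset.sum_congr rfl fun d hd => by rw [(Finset.mem_filter.mp hd).2]
      _ = 2 * F e := by rw [Finset.sum_const, hcard, nsmul_eq_mul]; norm_num
  have hpairs : ∑ i : V, ∑ j : V, (if G.Adj i j then F s(i, j) else 0)
      = ∑ d : G.Dart, F d.edge := by
    rw [← Finset.sum_product', Finset.sum_ite, Finset.sum_const_zero, add_zero]
    refine Finset.sum_bij' (fun p hp => (⟨p, ?_⟩ : G.Dart))
      (fun d _ => d.toProd) ?_ ?_ ?_ ?_ ?_
    · exact (Finset.mem_filter.mp hp).2
    · intro a ha; exact Finset.mem_univ _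
    · intro d _
      simp only [Finset.mem_filter, Finset.mem_product, Finset.mem_univ, true_and, and_true]
      exact d.adj
    · intro a ha; rfl
    · intro d _; rfl
    · intro a ha; rfl
  rw [hpairs, hdarts, ← Finset.mul_sum]
  ring

lemma card_pairs_through_edge {n : ℕ} {G : SimpleGraph (Fin n)} (hG : G.Connected)
    (P : ShortestPathSystem G) (a b : Fin n) :
    2 * (Finset.univ.filter
      (fun p : Fin n × Fin n => s(a, b) ∈ (P.path p.1 p.2).edges)).card ≤ n ^ 2 := by
  classical
  set A := Finset.univ.filter (fun w : Fin n => G.dist w a < G.dist w b) with hA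
  set B := Finset.univ.filter (fun w : Fin n => G.dist w b < G.dist w a) with hB
  have hsub : Finset.univ.filter
      (fun p : Fin n × Fin n => s(a, b) ∈ (P.path p.1 p.2).edges) ⊆ A ×ˢ B ∪ B ×ˢ A := by
    intro p hp
    have hmem := (Finset.mem_filter.mp hp).2
    have horient := geodesic_edge_orientation hG (P.path p.1 p.2) (P.length_eq p.1 p.2) hmem
    rcases horient with ⟨h1, h2⟩ | ⟨h1, h2⟩
    · exact Finset.mem_union_left _ (Finset.mem_product.mpr
        ⟨Finset.mem_filter.mpr ⟨Finset.mem_univ _, h1⟩,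
         Finset.mem_filter.mpr ⟨Finset.mem_univ _, h2⟩⟩)
    · exact Finset.mem_union_right _ (Finset.mem_product.mpr
        ⟨Finset.mem_filter.mpr ⟨Finset.mem_univ _, h1⟩,
         Finset.mem_filter.mpr ⟨Finset.mem_univ _, h2⟩⟩)
  have hcard : (Finset.univ.filter
      (fun p : Fin n × Fin n => s(a, b) ∈ (P.path p.1 p.2).edges)).card
        ≤ A.card * B.card + B.card * A.card := by
    calc _ ≤ (A ×ˢ B ∪ B ×ˢ A).card := Finset.card_le_card hsub
      _ ≤ (A ×ˢ B).card + (B ×ˢ A).card := Finset.card_union_le _ _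
      _ = A.card * B.card + B.card * A.card := by rw [Finset.card_product, Finset.card_product]
  have hdisj : Disjoint A B := by
    rw [Finset.disjoint_left]
    intro w hwA hwB
    have h1 := (Finset.mem_filter.mp hwA).2
    have h2 := (Finset.mem_filter.mp hwB).2
    omega
  have hAB : A.card + B.card ≤ n := by
    calc A.card + B.card = (A ∪ B).card := (Finset.card_union_of_disjoint hdisj).symm
      _ ≤ (Finset.univ : Finset (Fin n)).card := Finset.card_le_card (Finset.subset_univ _)
      _ = n := by simp
  have h4 : 4 * (A.card * B.card) ≤ (A.card + B.card) ^ 2 := by nlinarith [two_mul_le_add_sq A.card B.card]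
  have h5 : (A.card + B.card) ^ 2 ≤ n ^ 2 := Nat.pow_le_pow_left hAB 2
  have h6 : B.card * A.card = A.card * B.card := Nat.mul_comm _ _
  omega

lemma sum_sum_sub_sq {n : ℕ} (x : Fin n → ℝ) (hx : ∑ i, x i = 0) :
    ∑ u : Fin n, ∑ v : Fin n, (x u - x v)^2 = 2 * n * ∑ i, (x i)^2 := by
  have h1 : ∀ u : Fin n, ∑ v : Fin n, (x u - x v)^2
      = (n : ℝ) * (x u)^2 - 2 * (x u) * (∑ v, x v) + ∑ v, (x v)^2 := by
    intro u
    simp_rw [sub_sq]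
    rw [Finset.sum_add_distrib, Finset.sum_sub_distrib, Finset.sum_const, Finset.card_univ,
      Fintype.card_fin, nsmul_eq_mul]
    rw [← Finset.mul_sum]
  simp_rw [h1, hx, mul_zero, sub_zero]
  rw [Finset.sum_add_distrib, Finset.sum_const, Finset.card_univ, Fintype.card_fin,
    ← Finset.mul_sum, nsmul_eq_mul]
  ring

lemma exists_sps {n : ℕ} {G : SimpleGraph (Fin n)} (hG : G.Connected) :
    Nonempty (ShortestPathSystem G) := by
  choose p hp hl using fun u v => hG.exists_path_of_dist u v
  exact ⟨⟨p, hp, hl⟩⟩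

lemma key_quad_bound {n : ℕ} (G : SimpleGraph (Fin n)) [DecidableRel G.Adj]
    (hG : G.Connected) (hn : 2 ≤ n) (x : Fin n → ℝ) (hx : ∑ i, x i = 0) :
    4 / ((n : ℝ) * (G.diam : ℝ)) * (∑ i, (x i)^2)
      ≤ dotProduct x (Matrix.mulVec (G.lapMatrix ℝ) x) := by
  classical
  obtain ⟨P⟩ := exists_sps hG
  haveI : Nonempty (Fin n) := ⟨⟨0, by omega⟩⟩
  haveI : Nontrivial (Fin n) := Fin.nontrivial_iff_two_le.mpr hn
  have hTop : G.ediam ≠ ⊤ := by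
    obtain ⟨u, v, huv⟩ := G.exists_edist_eq_ediam_of_finite
    rw [← huv]
    exact SimpleGraph.edist_ne_top_iff_reachable.mpr (hG u v)
  have hD1 : 1 ≤ G.diam := by
    have h01 : (⟨0, by omega⟩ : Fin n) ≠ ⟨1, by omega⟩ := by simp
    have := hG.pos_dist_of_ne h01
    exact this.trans_le (G.dist_le_diam hTop)
  set D : ℝ := (G.diam : ℝ) with hDdef
  have hD0 : (0 : ℝ) < D := by rw [hDdef]; exact_mod_cast hD1
  have hn0 : (0 : ℝ) < n := by positivity
  set Q : ℝ := ∑ e ∈ G.edgeFinset, edgeSq x e with hQ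
  have hQnonneg : 0 ≤ Q := Finset.sum_nonneg fun e _ => edgeSq_nonneg x e
  -- per-pair bound
  have hpair : ∀ u v : Fin n, (x u - x v)^2
      ≤ D * ∑ e ∈ G.edgeFinset, (if e ∈ (P.path u v).edges then edgeSq x e else 0) := by
    intro u v
    have h1 := walk_sq_le x (P.path u v)
    rw [walk_edges_sum_eq (P.path u v) ((P.isPath u v).edges_nodup) x] at h1
    refine h1.trans (mul_le_mul_of_nonneg_right ?_ ?_)
    · rw [P.length_eq, hDdef]
      exact_mod_cast G.dist_le_diam hTop
    · exact Finset.sum_nonneg fun e _ => by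
        split
        · exact edgeSq_nonneg x e
        · exact le_refl 0
  -- per-edge count
  have hcount : ∀ e ∈ G.edgeFinset,
      ∑ u : Fin n, ∑ v : Fin n, (if e ∈ (P.path u v).edges then edgeSq x e else 0)
        ≤ ((n : ℝ)^2 / 2) * edgeSq x e := by
    intro e he
    induction e with
    | _ a b =>
      rw [← Finset.sum_product']
      rw [Finset.sum_ite, Finset.sum_const_zero, add_zero, Finset.sum_const, nsmul_eq_mul]
      have hc := card_pairs_through_edge hG P a b
      have hcR : ((Finset.univ.filter
          (fun p : Fin n × Fin n => s(a, b) ∈ (P.path p.1 p.2).edges)).card : ℝ)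
            ≤ (n : ℝ)^2 / 2 := by
        rw [le_div_iff₀ (by norm_num : (0:ℝ) < 2)]
        exact_mod_cast (by omega : (Finset.univ.filter
          (fun p : Fin n × Fin n => s(a, b) ∈ (P.path p.1 p.2).edges)).card * 2 ≤ n ^ 2)
      have : (Finset.filter (fun p : Fin n × Fin n => s(a, b) ∈ (P.path p.1 p.2).edges)
          (Finset.univ ×ˢ Finset.univ)) = (Finset.univ.filter
          (fun p : Fin n × Fin n => s(a, b) ∈ (P.path p.1 p.2).edges)) := by
        rw [Finset.univ_product_univ]
      rw [this]
      exact mul_le_mul_of_nonneg_right hcR (edgeSq_nonneg x _)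
  -- main chain
  have hmain : 2 * (n : ℝ) * (∑ i, (x i)^2) ≤ D * (((n : ℝ)^2 / 2) * Q) := by
    rw [← sum_sum_sub_sq x hx]
    calc ∑ u : Fin n, ∑ v : Fin n, (x u - x v)^2
        ≤ ∑ u : Fin n, ∑ v : Fin n, D * ∑ e ∈ G.edgeFinset,
            (if e ∈ (P.path u v).edges then edgeSq x e else 0) :=
          Finset.sum_le_sum fun u _ => Finset.sum_le_sum fun v _ => hpair u v
      _ = D * ∑ e ∈ G.edgeFinset, ∑ u : Fin n, ∑ v : Fin n,
            (if e ∈ (P.path u v).edges then edgeSq x e else 0) := by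
          simp_rw [← Finset.mul_sum]
          congr 1
          calc ∑ u : Fin n, ∑ v : Fin n, ∑ e ∈ G.edgeFinset,
              (if e ∈ (P.path u v).edges then edgeSq x e else 0)
              = ∑ u : Fin n, ∑ e ∈ G.edgeFinset, ∑ v : Fin n,
                (if e ∈ (P.path u v).edges then edgeSq x e else 0) :=
                Finset.sum_congr rfl fun u _ => Finset.sum_comm
            _ = ∑ e ∈ G.edgeFinset, ∑ u : Fin n, ∑ v : Fin n,
                (if e ∈ (P.path u v).edges then edgeSq x e else 0) := Finset.sum_comm
      _ ≤ D * ∑ e ∈ G.edgeFinset, ((n : ℝ)^2 / 2) * edgeSq x e :=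
          mul_le_mul_of_nonneg_left (Finset.sum_le_sum hcount) (le_of_lt hD0)
      _ = D * (((n : ℝ)^2 / 2) * Q) := by rw [← Finset.mul_sum, hQ]
  have hquad : dotProduct x (Matrix.mulVec (G.lapMatrix ℝ) x) = Q := by
    rw [hQ, sum_edgeFinset_eq_half (edgeSq x), ← Matrix.toLinearMap₂'_apply',
      SimpleGraph.lapMatrix_toLinearMap₂']
    simp_rw [edgeSq_mk]
  rw [hquad]
  rw [div_mul_eq_mul_div, div_le_iff₀ (by positivity)]
  nlinarith [hmain, hQnonneg, hD0, hn0, Finset.sum_nonneg (fun i (_ : i ∈ Finset.univ) => sq_nonneg (x i))]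

end MoharAux

/-- Mohar's lower bound: `λ₂ ≥ 4 / (n · D_max)`. -/
theorem mohar_bound {n : ℕ} (G : SimpleGraph (Fin n)) [DecidableRel G.Adj]
    (hG : G.Connected) (hn : 2 ≤ n) :
    4 / ((n : ℝ) * (G.diam : ℝ)) ≤ algebraicConnectivity G := by
  classical
  have h1n : 1 < n := hn
  set hL : (G.lapMatrix ℝ).IsHermitian := (G.posSemidef_lapMatrix ℝ).1 with hLdef
  set b := hL.eigenvectorBasis with hb
  set lam := hL.eigenvalues with hlam
  set σ := Tuple.sort lam with hσ
  set i0 := σ ⟨0, by omega⟩ with hi0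
  set i1 := σ ⟨1, h1n⟩ with hi1
  have hne : i0 ≠ i1 := by
    intro h
    have := σ.injective h
    simp at this
  have hij : ∀ i j : Fin n, (∑ k, (b i) k * (b j) k) = if i = j then 1 else 0 := by
    intro i j
    have horth := orthonormal_iff_ite.mp b.orthonormal i j
    simpa [PiLp.inner_apply, RCLike.inner_apply, conj_trivial, mul_comm] using horth
  set sv := ∑ k, (b i0) k with hsv
  set sw := ∑ k, (b i1) k with hsw
  obtain ⟨a, c, hac0, hacpos⟩ : ∃ a c : ℝ, a * sv + c * sw = 0 ∧ 0 < a^2 + c^2 := by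
    by_cases h0 : sv = 0 ∧ sw = 0
    · exact ⟨1, 0, by rw [h0.1, h0.2]; ring, by norm_num⟩
    · refine ⟨sw, -sv, by ring, ?_⟩
      rcases not_and_or.mp h0 with h | h
      · have : 0 < sv^2 := by positivity
        nlinarith [sq_nonneg sw]
      · have : 0 < sw^2 := by positivity
        nlinarith [sq_nonneg sv]
  set x : Fin n → ℝ := fun k => a * (b i0) k + c * (b i1) k with hx
  have hxsum : ∑ k, x k = 0 := by
    rw [hx]
    simp only []
    rw [Finset.sum_add_distrib, ← Finset.mul_sum, ← Finset.mul_sum, ← hsv, ← hsw]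
    exact hac0
  have hxx : ∑ k, (x k)^2 = a^2 + c^2 := by
    have hexp : ∀ k, (x k)^2 = a^2 * ((b i0) k * (b i0) k)
        + c^2 * ((b i1) k * (b i1) k) + (2*a*c) * ((b i0) k * (b i1) k) := by
      intro k; rw [hx]; ring
    simp_rw [hexp]
    rw [Finset.sum_add_distrib, Finset.sum_add_distrib, ← Finset.mul_sum, ← Finset.mul_sum,
      ← Finset.mul_sum, hij i0 i0, hij i1 i1, hij i0 i1, if_pos rfl, if_pos rfl, if_neg hne]
    ring
  have hmulvec : Matrix.mulVec (G.lapMatrix ℝ) x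
      = fun k => a * lam i0 * (b i0) k + c * lam i1 * (b i1) k := by
    have hxdecomp : x = (a • ⇑(b i0) + c • ⇑(b i1)) := by
      funext k; rw [hx]; simp
    rw [hxdecomp, Matrix.mulVec_add, Matrix.mulVec_smul, Matrix.mulVec_smul,
      hL.mulVec_eigenvectorBasis, hL.mulVec_eigenvectorBasis]
    funext k
    simp [hlam]
    ring
  have hquad : dotProduct x (Matrix.mulVec (G.lapMatrix ℝ) x)
      = lam i0 * a^2 + lam i1 * c^2 := by
    rw [hmulvec, dotProduct]
    have hexp : ∀ k, x k * (a * lam i0 * (b i0) k + c * lam i1 * (b i1) k)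
        = a^2 * lam i0 * ((b i0) k * (b i0) k) + c^2 * lam i1 * ((b i1) k * (b i1) k)
          + (a * c * (lam i0 + lam i1)) * ((b i0) k * (b i1) k) := by
      intro k; rw [hx]; ring
    simp_rw [hexp]
    rw [Finset.sum_add_distrib, Finset.sum_add_distrib, ← Finset.mul_sum, ← Finset.mul_sum,
      ← Finset.mul_sum, hij i0 i0, hij i1 i1, hij i0 i1, if_pos rfl, if_pos rfl, if_neg hne]
    ring
  have hkey := key_quad_bound G hG hn x hxsum
  rw [hxx, hquad] at hkey
  have hmono : lam i0 ≤ lam i1 := by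
    have := Tuple.monotone_sort lam (show (⟨0, by omega⟩ : Fin n) ≤ ⟨1, h1n⟩ by simp)
    exact this
  have hfinal : 4 / ((n : ℝ) * (G.diam : ℝ)) ≤ lam i1 := by
    have h2 : lam i0 * a^2 + lam i1 * c^2 ≤ lam i1 * (a^2 + c^2) := by
      nlinarith [hmono, sq_nonneg a]
    have h3 : 4 / ((n : ℝ) * (G.diam : ℝ)) * (a^2 + c^2) ≤ lam i1 * (a^2 + c^2) :=
      hkey.trans h2
    exact le_of_mul_le_mul_right h3 hacpos
  rw [algebraicConnectivity, dif_pos h1n]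
  exact hfinal
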